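/- For every real number x > 0, -x·log x = ∫₀¹ (((1 - t)·x⁻¹ + t)⁻¹ - x)/t dt. -/

import Mathlib

theorem stmt_1 (x : ℝ) (hx : 0 < x) :
    -x * Real.log x = ∫ t in (0:ℝ)..1, (((1 - t) * x⁻¹ + t)⁻¹ - x) / t := by
  set c : ℝ := x - 1 with hc
  have hden : ∀ t : ℝ, t ∈ Set.Icc (0:ℝ) 1 → 0 < 1 + t * c := by
    intro t ht
    have : 1 + t * c = (1 - t) + t * x := by ring
    rw [this]
    rcases lt_or_eq_of_le ht.2 with h1 | h1
    · have := mul_nonneg ht.1 hx.le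
      linarith
    · subst h1; simpa using hx
  -- rewrite the integrand on (0,1]
  have hcongr : ∀ t ∈ Set.Ioc (0:ℝ) 1,
      (((1 - t) * x⁻¹ + t)⁻¹ - x) / t = -x * c * (1 + t * c)⁻¹ := by
    intro t ht
    have htpos : 0 < t := ht.1
    have hd : 0 < 1 + t * c := hden t ⟨ht.1.le, ht.2⟩
    have h1 : (1 - t) * x⁻¹ + t = (1 + t * c) / x := by
      field_simp
      ring
    rw [h1]
    rw [inv_div]
    field_simp
    ring
  have hEq : (∫ t in (0:ℝ)..1, (((1 - t) * x⁻¹ + t)⁻¹ - x) / t)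
      = ∫ t in (0:ℝ)..1, -x * c * (1 + t * c)⁻¹ := by
    apply intervalIntegral.integral_congr_ae
    have h01 : Set.uIoc (0:ℝ) 1 = Set.Ioc 0 1 := by
      rw [Set.uIoc_of_le]; norm_num
    filter_upwards with t ht
    rw [h01] at ht
    exact hcongr t ht
  rw [hEq]
  have hderiv : ∀ t ∈ Set.uIcc (0:ℝ) 1,
      HasDerivAt (fun s : ℝ => -x * Real.log (1 + s * c)) (-x * c * (1 + t * c)⁻¹) t := by
    intro t ht
    rw [Set.uIcc_of_le (by norm_num : (0:ℝ) ≤ 1)] at ht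
    have hd : 0 < 1 + t * c := hden t ht
    have h1 : HasDerivAt (fun s : ℝ => 1 + s * c) c t := by
      simpa using ((hasDerivAt_id t).mul_const c).const_add 1
    have h2 := (Real.hasDerivAt_log hd.ne').comp t h1
    have h3 := h2.const_mul (-x)
    rw [show -x * c * (1 + t * c)⁻¹ = -x * ((1 + t * c)⁻¹ * c) by ring]
    exact h3
  have hcont : ContinuousOn (fun t : ℝ => -x * c * (1 + t * c)⁻¹) (Set.uIcc (0:ℝ) 1) := by
    rw [Set.uIcc_of_le (by norm_num : (0:ℝ) ≤ 1)]
    apply ContinuousOn.mul continuousOn_const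
    apply ContinuousOn.inv₀ (by fun_prop)
    intro t ht
    exact (hden t ht).ne'
  rw [intervalIntegral.integral_eq_sub_of_hasDerivAt hderiv
    (hcont.intervalIntegrable)]
  simp [hc]
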